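/- Stable Lorenz-gauge potentials for an incoming plane wave: Let ω > 0, μ, ε > 0, k = ω√(με), and let u, E_p ∈ ℝ³ with |u| = 1 and u·E_p = 0. Define A'(x) = −u (x·E_p) √(με) e^{ik u·x} and φ'(x) = −(x·E_p) e^{ik u·x} for x ∈ ℝ³. Then: (i) ΔA' + k²A' = 0 and Δφ' + k²φ' = 0 on ℝ³; (ii) the Lorenz gauge holds: ∇·A' = iωμε φ'; (iii) these potentials represent the incoming plane wave: iωA'(x) − ∇φ'(x) = E_p e^{ik u·x} and (1/μ)(∇×A')(x) = √(ε/μ) (u×E_p) e^{ik u·x} for all x ∈ ℝ³; (iv) A' and φ' are bounded on every bounded set uniformly as ω → 0. -/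

import Mathlib

noncomputable section

open MeasureTheory Filter Complex
open scoped NNReal Topology

/-- Three-dimensional Euclidean space. -/
abbrev R3 := EuclideanSpace ℝ (Fin 3)

/-- Standard basis vectors of `R3`. -/
def e3 (i : Fin 3) : R3 := EuclideanSpace.single i 1

/-- `i`-th partial derivative of a complex-valued function on `R3`. -/
def pd (i : Fin 3) (f : R3 → ℂ) (x : R3) : ℂ := fderiv ℝ f x (e3 i)

/-- Gradient (as a complex 3-vector) of a complex scalar field. -/
def grad (f : R3 → ℂ) (x : R3) : Fin 3 → ℂ := fun i => pd i f x

/-- Divergence of a complex vector field. -/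
def vdiv (F : R3 → Fin 3 → ℂ) (x : R3) : ℂ := ∑ i, pd i (fun y => F y i) x

/-- Curl of a complex vector field. -/
def curl (F : R3 → Fin 3 → ℂ) (x : R3) : Fin 3 → ℂ := fun i =>
  pd (i + 1) (fun y => F y (i + 2)) x - pd (i + 2) (fun y => F y (i + 1)) x

/-- Laplacian of a complex scalar field. -/
def lap (f : R3 → ℂ) (x : R3) : ℂ := ∑ i, pd i (fun y => pd i f y) x

/-- Cross product of complex 3-vectors. -/
def crossC (a b : Fin 3 → ℂ) : Fin 3 → ℂ := fun i =>
  a (i + 1) * b (i + 2) - a (i + 2) * b (i + 1)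

/-- (Bilinear, unconjugated) dot product of complex 3-vectors. -/
def dotC (a b : Fin 3 → ℂ) : ℂ := ∑ i, a i * b i

/-- Complexification of a real vector. -/
def toC (v : R3) : Fin 3 → ℂ := fun i => (v i : ℂ)

/-- The surface measure: 2-dimensional Hausdorff measure on `R3`. -/
def surf : Measure R3 := μH[2]

/-- Scalar Sommerfeld radiation condition:
`(x/|x|)·∇φ(x) − ikφ(x) = o(1/|x|)` uniformly as `|x| → ∞`. -/
def SRC (k : ℝ) (φ : R3 → ℂ) : Prop :=
  ∀ ε > (0:ℝ), ∃ R : ℝ, ∀ x : R3, R ≤ ‖x‖ →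
    ‖dotC (toC ((‖x‖)⁻¹ • x)) (grad φ x) - Complex.I * (k:ℂ) * φ x‖ ≤ ε / ‖x‖

/-- Vector radiation condition:
`(∇×A)×(x/|x|) + (x/|x|)(∇·A) − ikA = o(1/|x|)` uniformly as `|x| → ∞`. -/
def VRC (k : ℝ) (A : R3 → Fin 3 → ℂ) : Prop :=
  ∀ ε > (0:ℝ), ∃ R : ℝ, ∀ x : R3, R ≤ ‖x‖ →
    ‖(fun i => crossC (curl A x) (toC ((‖x‖)⁻¹ • x)) i
        + toC ((‖x‖)⁻¹ • x) i * vdiv A x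
        - Complex.I * (k:ℂ) * A x i : Fin 3 → ℂ)‖ ≤ ε / ‖x‖

/-- `f = O(1/|x|)` as `|x| → ∞`. -/
def bigO1 {E : Type*} [Norm E] (f : R3 → E) : Prop :=
  ∃ C R : ℝ, ∀ x : R3, R ≤ ‖x‖ → ‖f x‖ ≤ C / ‖x‖

/-- `f = O(1/|x|²)` as `|x| → ∞`. -/
def bigO2 {E : Type*} [Norm E] (f : R3 → E) : Prop :=
  ∃ C R : ℝ, ∀ x : R3, R ≤ ‖x‖ → ‖f x‖ ≤ C / ‖x‖ ^ 2

/-- Static decay conditions for a scalar potential: `φ = O(1/|x|)`, `∇φ = O(1/|x|²)`. -/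
def SDecay (φ : R3 → ℂ) : Prop := bigO1 φ ∧ bigO2 (fun x => grad φ x)

/-- Static decay conditions for a vector potential:
`A = O(1/|x|)`, `∇×A = O(1/|x|²)`, `∇·A = O(1/|x|²)`. -/
def VDecay (A : R3 → Fin 3 → ℂ) : Prop :=
  bigO1 (fun x => A x) ∧ bigO2 (fun x => curl A x) ∧ bigO2 (fun x => vdiv A x)

/-- `D` has `C^m` boundary with outward unit normal `n`: near every boundary point the
boundary is the zero level set of a `C^m` defining function `u` with nonvanishing gradient,
negative inside `D`, and `n = ∇u/|∇u|` on the boundary. -/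
def HasLevelNormal (m : ℕ) (D : Set R3) (n : R3 → R3) : Prop :=
  ∀ x ∈ frontier D, ∃ (U : Set R3) (u : R3 → ℝ), IsOpen U ∧ x ∈ U ∧
    ContDiffOn ℝ m u U ∧ (∀ y ∈ U ∩ frontier D, gradient u y ≠ 0) ∧
    U ∩ D = {y ∈ U | u y < 0} ∧ U ∩ frontier D = {y ∈ U | u y = 0} ∧
    ∀ y ∈ U ∩ frontier D, n y = ‖gradient u y‖⁻¹ • gradient u y

/-- A bounded open scatterer `D ⊂ ℝ³` with `C²` boundary, connected exterior,
outward unit normal `n`, and boundary components `comp 0, …, comp (N-1)`. -/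
structure CDomain where
  D : Set R3
  n : R3 → R3
  openD : IsOpen D
  bddD : Bornology.IsBounded D
  extConn : IsConnected ((closure D)ᶜ)
  bdry : HasLevelNormal 2 D n
  N : ℕ
  comp : Fin N → Set R3
  compConn : ∀ j, IsConnected (comp j)
  compUnion : ⋃ j, comp j = frontier D
  compDisj : ∀ i j, i ≠ j → Disjoint (comp i) (comp j)

/-- The scalar modified Dirichlet problem with wavenumber `k ≥ 0` and data `(f, Q)`:
`Δφ + k²φ = 0` outside `cl(D)`, `φ = f + V_j` on each boundary component,
`∫_{∂D_j} ∂φ/∂n dS = Q_j`, with the Sommerfeld radiation condition for `k > 0`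
and the static decay conditions for `k = 0`. -/
def ScalarMDP (Om : CDomain) (k : ℝ) (f : R3 → ℂ) (Q : Fin Om.N → ℂ)
    (φ : R3 → ℂ) (V : Fin Om.N → ℂ) : Prop :=
  ContDiffOn ℝ 2 φ (closure Om.D)ᶜ ∧ ContDiffOn ℝ 1 φ Om.Dᶜ ∧
  (∀ x ∈ (closure Om.D)ᶜ, lap φ x + (k:ℂ)^2 * φ x = 0) ∧
  (∀ j, ∀ x ∈ Om.comp j, φ x = f x + V j) ∧
  (∀ j, ∫ x in Om.comp j, dotC (toC (Om.n x)) (grad φ x) ∂surf = Q j) ∧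
  (0 < k → SRC k φ) ∧ (k = 0 → SDecay φ)

/-- The vector modified Dirichlet problem with wavenumber `k ≥ 0` and data `(f, h, q)`:
`ΔA + k²A = 0` outside `cl(D)`, `n×A = f` on `∂D`, `∇·A = h + v_j` on each boundary
component, `∫_{∂D_j} n·A dS = q_j`, with the vector radiation condition for `k > 0`
and the static decay conditions for `k = 0`. -/
def VectorMDP (Om : CDomain) (k : ℝ) (f : R3 → Fin 3 → ℂ) (h : R3 → ℂ)
    (q : Fin Om.N → ℂ) (A : R3 → Fin 3 → ℂ) (v : Fin Om.N → ℂ) : Prop :=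
  ContDiffOn ℝ 2 A (closure Om.D)ᶜ ∧ ContDiffOn ℝ 1 A Om.Dᶜ ∧
  (∀ x ∈ (closure Om.D)ᶜ, ∀ i, lap (fun y => A y i) x + (k:ℂ)^2 * A x i = 0) ∧
  (∀ x ∈ frontier Om.D, crossC (toC (Om.n x)) (A x) = f x) ∧
  (∀ j, ∀ x ∈ Om.comp j, vdiv A x = h x + v j) ∧
  (∀ j, ∫ x in Om.comp j, dotC (toC (Om.n x)) (A x) ∂surf = q j) ∧
  (0 < k → VRC k A) ∧ (k = 0 → VDecay A)

/-- Membership in the Hölder space `C^{0,α}` on a set. -/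
def MemHolderC {E : Type*} [NormedAddCommGroup E] (r : ℝ≥0) (s : Set R3) (f : R3 → E) : Prop :=
  ∃ C : ℝ≥0, HolderOnWith C r f s

/-- The Hölder norm `‖f‖_{0,α,s} = sup_s |f| + sup_{x≠y∈s} |f x − f y|/|x−y|^α`. -/
def holderNorm {E : Type*} [NormedAddCommGroup E] (r : ℝ≥0) (s : Set R3) (f : R3 → E) : ℝ :=
  (⨆ x : s, ‖f (x : R3)‖) +
    ⨆ p : {p : R3 × R3 // p.1 ∈ s ∧ p.2 ∈ s ∧ p.1 ≠ p.2},
      ‖f (p : R3 × R3).1 - f (p : R3 × R3).2‖ / ‖(p : R3 × R3).1 - (p : R3 × R3).2‖ ^ (r : ℝ)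

/-- The Helmholtz Green's function `g_k(x) = e^{ik|x|}/(4π|x|)` (real wavenumber). -/
def gk (k : ℝ) (x : R3) : ℂ := Complex.exp (Complex.I * (k:ℂ) * (‖x‖:ℂ)) / (4 * Real.pi * ‖x‖)

/-- Single layer potential with density `σ` on the surface `S`. -/
def SL (S : Set R3) (k : ℝ) (σ : R3 → ℂ) (z : R3) : ℂ := ∫ y in S, gk k (z - y) * σ y ∂surf

/-- Componentwise single layer potential with vector density `a` on the surface `S`. -/
def SLv (S : Set R3) (k : ℝ) (a : R3 → Fin 3 → ℂ) (z : R3) : Fin 3 → ℂ :=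
  fun i => ∫ y in S, gk k (z - y) * a y i ∂surf

/-- Double layer potential: `D_k σ(z) = ∫_S (∂g_k/∂n_y)(z−y) σ(y) dS(y)`. -/
def DL (S : Set R3) (n : R3 → R3) (k : ℝ) (σ : R3 → ℂ) (z : R3) : ℂ :=
  ∫ y in S, dotC (toC (n y)) (grad (fun w => gk k (z - w)) y) * σ y ∂surf

/-- The operator `S'_k`: `S'_k σ(x) = ∫_S (∂g_k/∂n_x)(x−y) σ(y) dS(y)`. -/
def SLn (S : Set R3) (n : R3 → R3) (k : ℝ) (σ : R3 → ℂ) (x : R3) : ℂ :=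
  ∫ y in S, dotC (toC (n x)) (grad (fun w => gk k (w - y)) x) * σ y ∂surf

/-- Boundary limit from the exterior along the normal direction. -/
def extLim {E : Type*} [TopologicalSpace E] [Nonempty E] (n : R3 → R3) (x : R3)
    (F : R3 → E) : E :=
  limUnder (𝓝[>] (0:ℝ)) (fun t : ℝ => F (x + t • n x))

/-- The operator `D'_k`: normal derivative of the double layer potential at `x ∈ ∂D`,
defined as the limit of `n(x)·∇D_k[σ](x + t n(x))` as `t → 0⁺`. -/
def DLn (S : Set R3) (n : R3 → R3) (k : ℝ) (σ : R3 → ℂ) (x : R3) : ℂ :=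
  extLim n x (fun z => dotC (toC (n x)) (grad (DL S n k σ) z))

open scoped RealInnerProductSpace

/-- The stable plane-wave vector potential
`A'(x) = −u (x·E_p) √(με) e^{ik u·x}` with `k = ω√(με)`. -/
def pwA (μ ε ω : ℝ) (u Ep : R3) (x : R3) : Fin 3 → ℂ := fun i =>
  -(u i : ℂ) * ((⟪x, Ep⟫ : ℝ) : ℂ) * (Real.sqrt (μ * ε) : ℂ) *
    Complex.exp (Complex.I * ((ω * Real.sqrt (μ * ε) : ℝ) : ℂ) * ((⟪u, x⟫ : ℝ) : ℂ))

/-- The stable plane-wave scalar potential `φ'(x) = −(x·E_p) e^{ik u·x}`. -/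
def pwPhi (μ ε ω : ℝ) (u Ep : R3) (x : R3) : ℂ :=
  -((⟪x, Ep⟫ : ℝ) : ℂ) *
    Complex.exp (Complex.I * ((ω * Real.sqrt (μ * ε) : ℝ) : ℂ) * ((⟪u, x⟫ : ℝ) : ℂ))

namespace PW

def Lv (v : R3) : R3 →L[ℝ] ℂ := Complex.ofRealCLM.comp (innerSL ℝ v)

lemma Lv_apply (v y : R3) : Lv v y = ((⟪v, y⟫ : ℝ) : ℂ) := rfl

lemma Lv_e3 (v : R3) (i : Fin 3) : Lv v (e3 i) = (v i : ℂ) := by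
  rw [Lv_apply]
  norm_cast
  simp [e3, EuclideanSpace.single_apply, mul_ite, Finset.sum_ite_eq', EuclideanSpace.inner_single_right]

def EE (c : ℝ) (u : R3) (y : R3) : ℂ :=
  Complex.exp (Complex.I * (c : ℂ) * ((⟪u, y⟫ : ℝ) : ℂ))

lemma hasFDerivAt_P (v x : R3) :
    HasFDerivAt (fun y : R3 => ((⟪y, v⟫ : ℝ) : ℂ)) (Lv v) x := by
  have h : (fun y : R3 => ((⟪y, v⟫ : ℝ) : ℂ)) = fun y => Lv v y := by
    funext y; rw [Lv_apply, real_inner_comm]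
  rw [h]; exact (Lv v).hasFDerivAt

lemma hasFDerivAt_E (c : ℝ) (u x : R3) :
    HasFDerivAt (EE c u) (EE c u x • ((Complex.I * (c:ℂ)) • Lv u)) x := by
  have h : EE c u = fun y => Complex.exp (Complex.I * (c:ℂ) * Lv u y) := rfl
  rw [h]
  exact ((Lv u).hasFDerivAt.const_mul (Complex.I * (c:ℂ))).cexp

lemma pd_E (c : ℝ) (u : R3) (i : Fin 3) (x : R3) :
    pd i (EE c u) x = Complex.I * (c:ℂ) * (u i : ℂ) * EE c u x := by
  rw [pd, (hasFDerivAt_E c u x).fderiv]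
  simp [Lv_e3]; ring

lemma pd_aE_bPE (c : ℝ) (u v : R3) (a b : ℂ) (i : Fin 3) (x : R3) :
    pd i (fun y => a * EE c u y + b * (((⟪y, v⟫ : ℝ) : ℂ) * EE c u y)) x
      = a * (Complex.I * (c:ℂ) * (u i : ℂ) * EE c u x)
        + b * (((v i : ℂ) + Complex.I * (c:ℂ) * (u i : ℂ) * ((⟪x, v⟫ : ℝ) : ℂ)) * EE c u x) := by
  have hE := hasFDerivAt_E c u x
  have hP := hasFDerivAt_P v x
  have h := ((hE.const_mul a).add ((hP.mul hE).const_mul b))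
  have h' : HasFDerivAt (fun y => a * EE c u y + b * (((⟪y, v⟫ : ℝ) : ℂ) * EE c u y)) _ x := h
  rw [pd, h'.fderiv]
  simp [Lv_e3]; ring

lemma pd_PE (c : ℝ) (u v : R3) (a : ℂ) (i : Fin 3) (x : R3) :
    pd i (fun y => a * (((⟪y, v⟫ : ℝ) : ℂ) * EE c u y)) x
      = a * (((v i : ℂ) + Complex.I * (c:ℂ) * (u i : ℂ) * ((⟪x, v⟫ : ℝ) : ℂ)) * EE c u x) := by
  have hE := hasFDerivAt_E c u x
  have hP := hasFDerivAt_P v x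
  have h := (hP.mul hE).const_mul a
  have h' : HasFDerivAt (fun y => a * (((⟪y, v⟫ : ℝ) : ℂ) * EE c u y)) _ x := h
  rw [pd, h'.fderiv]
  simp [Lv_e3]; ring

end PW

/-- Stable Lorenz-gauge potentials for an incoming plane wave:
the potentials `A', φ'` above satisfy the Helmholtz equations and the Lorenz gauge,
represent the plane wave `E = E_p e^{iku·x}`, `H = √(ε/μ)(u×E_p)e^{iku·x}`, and are
bounded on every bounded set uniformly as `ω → 0`. -/
theorem plane_wave_stable_lorenz_potentials (ω μ ε : ℝ) (hω : 0 < ω) (hμ : 0 < μ)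
    (hε : 0 < ε) (k : ℝ) (hk : k = ω * Real.sqrt (μ * ε))
    (u Ep : R3) (hu : ‖u‖ = 1) (huEp : ⟪u, Ep⟫ = (0:ℝ)) :
    (∀ x : R3, ∀ i, lap (fun y => pwA μ ε ω u Ep y i) x + (k:ℂ)^2 * pwA μ ε ω u Ep x i = 0) ∧
    (∀ x : R3, lap (pwPhi μ ε ω u Ep) x + (k:ℂ)^2 * pwPhi μ ε ω u Ep x = 0) ∧
    (∀ x : R3, vdiv (pwA μ ε ω u Ep) x = Complex.I * (ω:ℂ) * (μ:ℂ) * (ε:ℂ) * pwPhi μ ε ω u Ep x) ∧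
    (∀ x : R3, ∀ i,
      Complex.I * (ω:ℂ) * pwA μ ε ω u Ep x i - grad (pwPhi μ ε ω u Ep) x i
        = (Ep i : ℂ) * Complex.exp (Complex.I * (k:ℂ) * ((⟪u, x⟫ : ℝ) : ℂ))) ∧
    (∀ x : R3, ∀ i,
      (1 / (μ:ℂ)) * curl (pwA μ ε ω u Ep) x i
        = (Real.sqrt (ε / μ) : ℂ) * crossC (toC u) (toC Ep) i *
            Complex.exp (Complex.I * (k:ℂ) * ((⟪u, x⟫ : ℝ) : ℂ))) ∧
    (∀ S : Set R3, Bornology.IsBounded S → ∃ C : ℝ,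
      ∀ ω' : ℝ, 0 ≤ ω' → ω' ≤ ω → ∀ x ∈ S,
        ‖pwA μ ε ω' u Ep x‖ ≤ C ∧ ‖pwPhi μ ε ω' u Ep x‖ ≤ C) := by
  subst hk
  have hμε : (0:ℝ) ≤ μ * ε := by positivity
  have h1R : u 0 * Ep 0 + u 1 * Ep 1 + u 2 * Ep 2 = 0 := by
    have h := huEp
    simp only [PiLp.inner_apply, RCLike.inner_apply, Fin.sum_univ_three, conj_trivial] at h
    linear_combination h
  have h2R : u 0 * u 0 + u 1 * u 1 + u 2 * u 2 = 1 := by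
    have h : (⟪u, u⟫ : ℝ) = 1 := by rw [real_inner_self_eq_norm_sq, hu, one_pow]
    simp only [PiLp.inner_apply, RCLike.inner_apply, Fin.sum_univ_three, conj_trivial] at h
    linear_combination h
  have h1C : (u 0 : ℂ) * Ep 0 + u 1 * Ep 1 + u 2 * Ep 2 = 0 := by
    have h := congrArg Complex.ofReal h1R; push_cast at h; linear_combination h
  have h2C : (u 0 : ℂ) * u 0 + u 1 * u 1 + u 2 * u 2 = 1 := by
    have h := congrArg Complex.ofReal h2R; push_cast at h; linear_combination h
  have hssC : (Real.sqrt (μ * ε) : ℂ) * (Real.sqrt (μ * ε) : ℂ) = (μ : ℂ) * (ε : ℂ) := by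
    norm_cast; exact Real.mul_self_sqrt hμε
  have hAfun : ∀ i : Fin 3, (fun y => pwA μ ε ω u Ep y i)
      = fun y => ((-(u i : ℂ)) * (Real.sqrt (μ * ε) : ℂ)) *
          (((⟪y, Ep⟫ : ℝ) : ℂ) * PW.EE (ω * Real.sqrt (μ * ε)) u y) := by
    intro i; funext y; simp only [pwA, PW.EE]; ring
  have hApd : ∀ (i j : Fin 3) (x : R3), pd j (fun y => pwA μ ε ω u Ep y i) x
      = ((-(u i : ℂ)) * (Real.sqrt (μ * ε) : ℂ)) *
          (((Ep j : ℂ) + Complex.I * ((ω * Real.sqrt (μ * ε) : ℝ) : ℂ) * (u j : ℂ) *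
              ((⟪x, Ep⟫ : ℝ) : ℂ)) * PW.EE (ω * Real.sqrt (μ * ε)) u x) := by
    intro i j x
    rw [hAfun i]
    exact PW.pd_PE _ u Ep _ j x
  have hPfun : pwPhi μ ε ω u Ep
      = fun y => (-1 : ℂ) * (((⟪y, Ep⟫ : ℝ) : ℂ) * PW.EE (ω * Real.sqrt (μ * ε)) u y) := by
    funext y; simp only [pwPhi, PW.EE]; ring
  have hPpd : ∀ (j : Fin 3) (x : R3), pd j (pwPhi μ ε ω u Ep) x
      = (-1 : ℂ) * (((Ep j : ℂ) + Complex.I * ((ω * Real.sqrt (μ * ε) : ℝ) : ℂ) * (u j : ℂ) *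
          ((⟪x, Ep⟫ : ℝ) : ℂ)) * PW.EE (ω * Real.sqrt (μ * ε)) u x) := by
    intro j x
    rw [hPfun]
    exact PW.pd_PE _ u Ep _ j x
  have hpd2 : ∀ (a : ℂ) (j : Fin 3) (x : R3),
      pd j (fun y => pd j (fun z => a * (((⟪z, Ep⟫ : ℝ) : ℂ) *
          PW.EE (ω * Real.sqrt (μ * ε)) u z)) y) x
      = (a * (Ep j : ℂ)) * (Complex.I * ((ω * Real.sqrt (μ * ε) : ℝ) : ℂ) * (u j : ℂ) *
            PW.EE (ω * Real.sqrt (μ * ε)) u x)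
        + (a * (Complex.I * ((ω * Real.sqrt (μ * ε) : ℝ) : ℂ) * (u j : ℂ))) *
            (((Ep j : ℂ) + Complex.I * ((ω * Real.sqrt (μ * ε) : ℝ) : ℂ) * (u j : ℂ) *
              ((⟪x, Ep⟫ : ℝ) : ℂ)) * PW.EE (ω * Real.sqrt (μ * ε)) u x) := by
    intro a j x
    have h : (fun y => pd j (fun z => a * (((⟪z, Ep⟫ : ℝ) : ℂ) *
        PW.EE (ω * Real.sqrt (μ * ε)) u z)) y)
        = fun y => (a * (Ep j : ℂ)) * PW.EE (ω * Real.sqrt (μ * ε)) u y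
            + (a * (Complex.I * ((ω * Real.sqrt (μ * ε) : ℝ) : ℂ) * (u j : ℂ))) *
                (((⟪y, Ep⟫ : ℝ) : ℂ) * PW.EE (ω * Real.sqrt (μ * ε)) u y) := by
      funext y
      rw [PW.pd_PE _ u Ep _ j y]
      ring
    rw [h]
    exact PW.pd_aE_bPE _ u Ep _ _ j x
  have hlap : ∀ (a : ℂ) (x : R3),
      lap (fun z => a * (((⟪z, Ep⟫ : ℝ) : ℂ) * PW.EE (ω * Real.sqrt (μ * ε)) u z)) x
        = -(((ω * Real.sqrt (μ * ε) : ℝ) : ℂ))^2 *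
            (a * (((⟪x, Ep⟫ : ℝ) : ℂ) * PW.EE (ω * Real.sqrt (μ * ε)) u x)) := by
    intro a x
    rw [lap, Fin.sum_univ_three, hpd2 a 0 x, hpd2 a 1 x, hpd2 a 2 x]
    push_cast
    linear_combination (2 * a * Complex.I * ((ω : ℂ) * (Real.sqrt (μ * ε) : ℂ)) *
        PW.EE (ω * Real.sqrt (μ * ε)) u x) * h1C
      + (a * Complex.I^2 * ((ω : ℂ) * (Real.sqrt (μ * ε) : ℂ))^2 * ((⟪x, Ep⟫ : ℝ) : ℂ) *
          PW.EE (ω * Real.sqrt (μ * ε)) u x) * h2C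
      + (a * ((ω : ℂ) * (Real.sqrt (μ * ε) : ℂ))^2 * ((⟪x, Ep⟫ : ℝ) : ℂ) *
          PW.EE (ω * Real.sqrt (μ * ε)) u x) * Complex.I_sq
  refine ⟨?_, ?_, ?_, ?_, ?_, ?_⟩
  · intro x i
    rw [hAfun i, hlap]
    simp only [pwA, PW.EE]
    push_cast
    ring
  · intro x
    rw [hPfun, hlap]
    push_cast
    ring
  · intro x
    rw [vdiv, Fin.sum_univ_three, hApd, hApd, hApd]
    simp only [hPfun]
    push_cast
    linear_combination (-(Real.sqrt (μ * ε) : ℂ) * PW.EE (ω * Real.sqrt (μ * ε)) u x) * h1C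
      + (-(Complex.I * (ω : ℂ) * (Real.sqrt (μ * ε) : ℂ) * (Real.sqrt (μ * ε) : ℂ) *
          ((⟪x, Ep⟫ : ℝ) : ℂ) * PW.EE (ω * Real.sqrt (μ * ε)) u x)) * h2C
      + (-(Complex.I * (ω : ℂ) * ((⟪x, Ep⟫ : ℝ) : ℂ) *
          PW.EE (ω * Real.sqrt (μ * ε)) u x)) * hssC
  · intro x i
    simp only [grad]
    rw [hPpd i x]
    simp only [pwA, PW.EE]
    push_cast
    ring
  · intro x i
    have hstC : ((Real.sqrt (μ * ε) : ℝ) : ℂ) = (μ : ℂ) * ((Real.sqrt (ε / μ) : ℝ) : ℂ) := by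
      have : Real.sqrt (μ * ε) = μ * Real.sqrt (ε / μ) := by
        rw [show μ * ε = μ ^ 2 * (ε / μ) by field_simp,
          Real.sqrt_mul (sq_nonneg μ), Real.sqrt_sq hμ.le]
      exact_mod_cast this
    have hμC : (μ : ℂ) ≠ 0 := by exact_mod_cast hμ.ne'
    rw [curl, hApd, hApd]
    simp only [crossC, toC, PW.EE]
    rw [hstC]
    field_simp
    ring
  · intro S hS
    obtain ⟨R, hR⟩ := (isBounded_iff_forall_norm_le).mp hS
    refine ⟨(|R| + 1) * ‖Ep‖ * (Real.sqrt (μ * ε) + 1), ?_⟩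
    intro ω' _ _ x hx
    have hxR : ‖x‖ ≤ |R| + 1 := le_trans (hR x hx) (by linarith [le_abs_self R])
    have hexp : ∀ a b : ℝ, ‖Complex.exp (Complex.I * (a : ℂ) * (b : ℂ))‖ = 1 := by
      intro a b
      rw [Complex.norm_exp]
      norm_num [Complex.mul_re]
    have hui : ∀ i : Fin 3, |u i| ≤ 1 := by
      intro i
      calc |u i| = |(⟪u, EuclideanSpace.single i (1:ℝ)⟫ : ℝ)| := by
            rw [EuclideanSpace.inner_single_right]; norm_num
        _ ≤ ‖u‖ * ‖EuclideanSpace.single i (1:ℝ)‖ := abs_real_inner_le_norm _ _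
        _ = 1 := by rw [hu, EuclideanSpace.norm_single]; norm_num
    have hip : |(⟪x, Ep⟫ : ℝ)| ≤ (|R| + 1) * ‖Ep‖ := by
      calc |(⟪x, Ep⟫ : ℝ)| ≤ ‖x‖ * ‖Ep‖ := abs_real_inner_le_norm _ _
        _ ≤ (|R| + 1) * ‖Ep‖ := by
            have := norm_nonneg Ep
            nlinarith
    have hC0 : (0:ℝ) ≤ (|R| + 1) * ‖Ep‖ * (Real.sqrt (μ * ε) + 1) := by positivity
    constructor
    · rw [pi_norm_le_iff_of_nonneg hC0]
      intro i
      have heq : ‖pwA μ ε ω' u Ep x i‖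
          = |u i| * |(⟪x, Ep⟫ : ℝ)| * Real.sqrt (μ * ε) := by
        simp only [pwA]
        rw [norm_mul, norm_mul, norm_mul, hexp, mul_one, norm_neg,
          Complex.norm_real, Complex.norm_real, Complex.norm_real,
          Real.norm_eq_abs, Real.norm_eq_abs, Real.norm_eq_abs,
          _root_.abs_of_nonneg (Real.sqrt_nonneg (μ * ε))]
      rw [heq]
      have h1 := hui i
      have h2 := abs_nonneg (u i)
      have h3 := abs_nonneg ((⟪x, Ep⟫ : ℝ))
      have h4 := Real.sqrt_nonneg (μ * ε)
      have h6 : |u i| * |(⟪x, Ep⟫ : ℝ)| ≤ (|R| + 1) * ‖Ep‖ := by nlinarith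
      have h7 : (0:ℝ) ≤ (|R| + 1) * ‖Ep‖ := by positivity
      nlinarith [mul_le_mul_of_nonneg_right h6 h4]
    · have heq : ‖pwPhi μ ε ω' u Ep x‖ = |(⟪x, Ep⟫ : ℝ)| := by
        simp only [pwPhi]
        rw [norm_mul, hexp, mul_one, norm_neg, Complex.norm_real, Real.norm_eq_abs]
      rw [heq]
      have h4 := Real.sqrt_nonneg (μ * ε)
      have h5 := abs_nonneg ((⟪x, Ep⟫ : ℝ))
      nlinarith
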